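/- The algebra W(2) does not satisfy the identity st^4_2, i.e. there exist elements a,b,c,d of W(2) such that Σ_{σ ∈ S_4} sgn(σ) x_{σ(4)}(x_{σ(3)}(x_{σ(2)}x_{σ(1)})) evaluated at (a,b,c,d) is nonzero. -/

import Mathlib

def tbl (F : Type*) [Field F] : Fin 8 → Fin 8 → Fin 8 → F :=
  ![![![-1, 0, 0, 0, 0, 0, 0, 0], ![0, -3, 0, 0, 0, 0, 0, 0], ![0, 0, 1, 0, 0, 0, 0, 0], ![0, 0, 0, 3, 0, 0, 0, 0], ![0, 0, 0, 0, -1, 0, 0, 0], ![0, 0, 0, 0, 0, 1, 0, 0], ![0, 0, 0, 0, 0, 0, 1, 0], ![0, 0, 0, 0, 0, 0, 0, -1]],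
    ![![0, 3, 0, 0, 0, 0, 0, 0], ![0, 0, 0, 0, 0, 0, 0, 0], ![2, 0, 0, 0, 0, 0, 0, 0], ![0, 0, 1, 0, 0, 0, 0, 0], ![0, 0, 0, 0, 0, 0, 0, 0], ![0, 0, 0, 0, -1, 0, 0, 0], ![0, 0, 0, 0, 0, 0, 0, 1], ![0, 0, 0, 0, 0, 0, 0, 0]],
    ![![0, 0, -2, 0, 0, 0, 0, 0], ![-1, 0, 0, 0, 0, 0, 0, 0], ![0, 0, 0, -3, 0, 0, 0, 0], ![0, 0, 0, 0, 0, 0, 0, 0], ![0, 0, 0, 0, 0, 1, 0, 0], ![0, 0, 0, 0, 0, 0, 0, 0], ![0, 0, 0, 0, 0, 0, 0, 0], ![0, 0, 0, 0, 0, 0, -1, 0]],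
    ![![0, 0, 0, 0, 0, 0, 0, 0], ![0, 0, 0, 0, 0, 0, 0, 0], ![0, 0, 0, 0, 0, 0, 0, 0], ![0, 0, 0, 0, 0, 0, 0, 0], ![0, 0, 0, 0, 0, 0, 0, 0], ![0, 0, 0, 0, 0, 0, 0, 0], ![0, 0, 0, 0, 0, 0, 0, 0], ![0, 0, 0, 0, 0, 0, 0, 0]],
    ![![-2, 0, 0, 0, 0, 0, 0, 0], ![0, -3, 0, 0, 0, 0, 0, 0], ![0, 0, -1, 0, 0, 0, 0, 0], ![0, 0, 0, 0, 0, 0, 0, 0], ![0, 0, 0, 0, -2, 0, 0, 0], ![0, 0, 0, 0, 0, -1, 0, 0], ![0, 0, 0, 0, 0, 0, -1, 0], ![0, 0, 0, 0, 0, 0, 0, -2]],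
    ![![0, 0, 2, 0, 0, 0, 0, 0], ![1, 0, 0, 0, 0, 0, 0, 0], ![0, 0, 0, 3, 0, 0, 0, 0], ![0, 0, 0, 0, 0, 0, 0, 0], ![0, 0, 0, 0, 0, -1, 0, 0], ![0, 0, 0, 0, 0, 0, 0, 0], ![0, 0, 0, 0, 0, 0, 0, 0], ![0, 0, 0, 0, 0, 0, 1, 0]],
    ![![0, 0, 2, 0, 0, 0, 0, 0], ![1, 0, 0, 0, 0, 0, 0, 0], ![0, 0, 0, 3, 0, 0, 0, 0], ![0, 0, 0, 0, 0, 0, 0, 0], ![0, 0, 0, 0, 0, -1, 0, 0], ![0, 0, 0, 0, 0, 0, 0, 0], ![0, 0, 0, 0, 0, 0, 0, 0], ![0, 0, 0, 0, 0, 0, 1, 0]],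
    ![![0, 0, 0, 0, 0, 0, 0, 0], ![0, 1, 0, 0, 0, 0, 0, 0], ![0, 0, -1, 0, 0, 0, 0, 0], ![0, 0, 0, -2, 0, 0, 0, 0], ![0, 0, 0, 0, 0, 0, 0, 0], ![0, 0, 0, 0, 0, -1, 0, 0], ![0, 0, 0, 0, 0, 0, -1, 0], ![0, 0, 0, 0, 0, 0, 0, 0]]]

def mul (F : Type*) [Field F] (x y : Fin 8 → F) : Fin 8 → F :=
  fun k => ∑ i, ∑ j, x i * y j * tbl F i j k


private lemma ap2' {n : ℕ} (p : Fin (n+3)) (e : Equiv.Perm (Fin (n+2))) :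
    Equiv.Perm.decomposeFin.symm (p, e) 2 = Equiv.swap 0 p (e 1).succ := by
  rw [show (2 : Fin (n+3)) = (1 : Fin (n+2)).succ from rfl,
    Equiv.Perm.decomposeFin_symm_apply_succ]

private lemma ap3' {n : ℕ} (p : Fin (n+4)) (e : Equiv.Perm (Fin (n+3))) :
    Equiv.Perm.decomposeFin.symm (p, e) 3 = Equiv.swap 0 p (e 2).succ := by
  rw [show (3 : Fin (n+4)) = (2 : Fin (n+3)).succ from rfl,
    Equiv.Perm.decomposeFin_symm_apply_succ]

set_option maxRecDepth 100000 in
set_option maxHeartbeats 4000000 in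
private lemma sum24 {M : Type*} [AddCommGroup M] (g : Fin 4 → Fin 4 → Fin 4 → Fin 4 → M) :
    ∑ σ : Equiv.Perm (Fin 4), (Equiv.Perm.sign σ : ℤ) • g (σ 0) (σ 1) (σ 2) (σ 3) =
      g 0 1 2 3 - g 1 0 2 3 - g 0 2 1 3 + g 2 0 1 3 + g 1 2 0 3 - g 2 1 0 3
      - g 0 1 3 2 + g 1 0 3 2 + g 0 3 1 2 - g 3 0 1 2 - g 1 3 0 2 + g 3 1 0 2
      + g 0 2 3 1 - g 2 0 3 1 - g 0 3 2 1 + g 3 0 2 1 + g 2 3 0 1 - g 3 2 0 1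
      - g 1 2 3 0 + g 2 1 3 0 + g 1 3 2 0 - g 3 1 2 0 - g 2 3 1 0 + g 3 2 1 0 := by
  rw [← Equiv.sum_comp Equiv.Perm.decomposeFin.symm, Fintype.sum_prod_type]
  simp only [← Equiv.sum_comp Equiv.Perm.decomposeFin.symm, Fintype.sum_prod_type]
  simp (config := { decide := true }) [Fin.sum_univ_succ, Equiv.Perm.decomposeFin.symm_sign,
    Equiv.Perm.decomposeFin_symm_apply_zero, Equiv.Perm.decomposeFin_symm_apply_one,
    ap2', ap3', Finset.univ_unique, Equiv.swap_apply_def, Fin.ext_iff, -Fin.val_eq_zero_iff,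
    Fin.succ_zero_eq_one, Fin.succ_one_eq_two,
    show Fin.succ (2:Fin 3) = 3 from rfl, show Fin.succ (1:Fin 2) = 2 from rfl,
    show Fin.succ (0:Fin 1) = 1 from rfl]
  abel

set_option maxHeartbeats 4000000 in
/-- `W(2)` does not satisfy the identity `st⁴₂`. -/
theorem W2_not_satisfies_st4_2 (F : Type*) [Field F] [CharZero F] :
    ∃ x : Fin 4 → (Fin 8 → F),
      ∑ σ : Equiv.Perm (Fin 4), (Equiv.Perm.sign σ : ℤ) •
        mul F (x (σ 3)) (mul F (x (σ 2)) (mul F (x (σ 1)) (x (σ 0)))) ≠ 0 := by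
  refine ⟨![![1,0,0,0,0,0,0,0], ![0,1,0,0,0,0,0,0], ![0,0,1,0,0,0,0,0], ![0,0,0,1,0,0,0,0]], fun h => ?_⟩
  rw [sum24 (fun a b c d => mul F
      ((![![1,0,0,0,0,0,0,0], ![0,1,0,0,0,0,0,0], ![0,0,1,0,0,0,0,0], ![0,0,0,1,0,0,0,0]] : Fin 4 → Fin 8 → F) d)
      (mul F (![![1,0,0,0,0,0,0,0], ![0,1,0,0,0,0,0,0], ![0,0,1,0,0,0,0,0], ![0,0,0,1,0,0,0,0]] c)
        (mul F (![![1,0,0,0,0,0,0,0], ![0,1,0,0,0,0,0,0], ![0,0,1,0,0,0,0,0], ![0,0,0,1,0,0,0,0]] b)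
          (![![1,0,0,0,0,0,0,0], ![0,1,0,0,0,0,0,0], ![0,0,1,0,0,0,0,0], ![0,0,0,1,0,0,0,0]] a))))] at h
  have h3 := congrFun h 3
  simp only [Matrix.cons_val] at h3
  norm_num (config := { maxSteps := 10000000 }) [mul, tbl, Fin.sum_univ_succ] at h3
  simp [Matrix.cons_val_three, Matrix.cons_val_zero, Matrix.head_cons, Matrix.tail_cons, Matrix.cons_val_succ] at h3
  norm_num at h3
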